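/- Let T : [0,1]² → ℝ be C^∞, let q, p ∈ ℕ with q ≠ 2 and index I := p − q + 1 ≥ 0, and define Q(r) = ∫_{r²}^1 s^{-q} r^p T(s², s^{-3}r³) d(s²) for r ∈ (0,1]. Then Q(r) = O(r^{min(I+1, p)}) as r → 0⁺. -/

import Mathlib

/-- Let `T : [0,1]² → ℝ` be `C^∞`, `q, p ∈ ℕ` with `q ≠ 2` and index
`I := p - q + 1 ≥ 0`, and `Q(r) = ∫_{r²}^1 s^{-q} r^p T(s², s^{-3} r³) d(s²)`
(written in the variable `v = s²`).  Then `Q(r) = O(r^{min(I+1,p)})` as `r → 0⁺`. -/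
theorem stmt_13 (T : ℝ × ℝ → ℝ)
    (hT : ContDiffOn ℝ (⊤ : ℕ∞) T (Set.Icc (0:ℝ) 1 ×ˢ Set.Icc (0:ℝ) 1))
    (q p : ℕ) (hq : q ≠ 2) (hI : q ≤ p + 1) :
    ∃ C > 0, ∃ r₀ > 0, ∀ r ∈ Set.Ioc (0:ℝ) r₀,
      |∫ v in (r^2)..1, v ^ (-(q:ℝ)/2) * r ^ p * T (v, v ^ (-(3:ℝ)/2) * r^3)|
        ≤ C * r ^ (min (p + 1 - q + 1) p) := by
  obtain ⟨M, hM⟩ := (isCompact_Icc.prod isCompact_Icc).exists_bound_of_continuousOn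
    hT.continuousOn
  set M' : ℝ := max M 1 with hM'def
  have hM'pos : (0:ℝ) < M' := lt_of_lt_of_le one_pos (le_max_right _ _)
  have hM'bound : ∀ x ∈ Set.Icc (0:ℝ) 1 ×ˢ Set.Icc (0:ℝ) 1, |T x| ≤ M' := fun x hx =>
    le_trans (hM x hx) (le_max_left _ _)
  refine ⟨2 * M', by positivity, 1/2, by norm_num, ?_⟩
  rintro r ⟨hr0, hr12⟩
  have hr1 : r ≤ 1 := hr12.trans (by norm_num)
  have hr2pos : (0:ℝ) < r^2 := by positivity
  have hr2lt1 : r^2 < 1 := by nlinarith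
  have h0notin : (0:ℝ) ∉ Set.uIcc (r^2) 1 := by
    rw [Set.uIcc_of_le hr2lt1.le]
    rintro ⟨h, _⟩; linarith
  -- pointwise bound
  have hcomp : ∀ v ∈ Set.uIoc (r^2) 1,
      ‖v ^ (-(q:ℝ)/2) * r ^ p * T (v, v ^ (-(3:ℝ)/2) * r^3)‖
        ≤ v ^ (-(q:ℝ)/2) * (r ^ p * M') := by
    intro v hv
    rw [Set.uIoc_of_le hr2lt1.le] at hv
    obtain ⟨hv1, hv2⟩ := hv
    have hv0 : (0:ℝ) < v := hr2pos.trans hv1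
    have hx0 : (0:ℝ) ≤ v ^ (-(3:ℝ)/2) * r^3 := by positivity
    have hx1 : v ^ (-(3:ℝ)/2) * r^3 ≤ 1 := by
      have h1 : v ^ (-(3:ℝ)/2) ≤ (r^2) ^ (-(3:ℝ)/2) :=
        Real.rpow_le_rpow_of_nonpos hr2pos hv1.le (by norm_num)
      have h2 : (r^2 : ℝ) ^ (-(3:ℝ)/2) = r ^ (-3 : ℝ) := by
        rw [← Real.rpow_natCast r 2, ← Real.rpow_mul hr0.le]
        norm_num
      have h3 : r ^ (-3:ℝ) * r^3 = 1 := by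
        rw [← Real.rpow_natCast r 3, ← Real.rpow_add hr0]
        norm_num
      calc v ^ (-(3:ℝ)/2) * r^3 ≤ r ^ (-3:ℝ) * r^3 := by
            rw [← h2]; exact mul_le_mul_of_nonneg_right h1 (by positivity)
        _ = 1 := h3
    have hTb : |T (v, v ^ (-(3:ℝ)/2) * r^3)| ≤ M' :=
      hM'bound _ ⟨⟨hv0.le, hv2⟩, ⟨hx0, hx1⟩⟩
    rw [Real.norm_eq_abs, abs_mul, abs_mul, abs_of_nonneg (Real.rpow_nonneg hv0.le _),
      abs_of_nonneg (pow_nonneg hr0.le _), mul_assoc]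
    exact mul_le_mul_of_nonneg_left
      (mul_le_mul_of_nonneg_left hTb (pow_nonneg hr0.le _)) (Real.rpow_nonneg hv0.le _)
  have hg_int : IntervalIntegrable (fun v => v ^ (-(q:ℝ)/2) * (r ^ p * M'))
      MeasureTheory.volume (r^2) 1 :=
    (intervalIntegral.intervalIntegrable_rpow (Or.inr h0notin)).mul_const _
  have hkey : |∫ v in (r^2)..1, v ^ (-(q:ℝ)/2) * r ^ p * T (v, v ^ (-(3:ℝ)/2) * r^3)|
      ≤ |∫ v in (r^2)..1, v ^ (-(q:ℝ)/2) * (r ^ p * M')| := by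
    rw [← Real.norm_eq_abs]
    exact intervalIntegral.norm_integral_le_abs_of_norm_le
      ((MeasureTheory.ae_restrict_iff' measurableSet_uIoc).mpr
        (MeasureTheory.ae_of_all _ hcomp)) hg_int
  have hgsplit : (∫ v in (r^2)..1, v ^ (-(q:ℝ)/2) * (r ^ p * M'))
      = (∫ v in (r^2)..1, v ^ (-(q:ℝ)/2)) * (r ^ p * M') :=
    intervalIntegral.integral_mul_const _ _
  have hqne : -(q:ℝ)/2 ≠ -1 := by
    intro h
    apply hq
    have : (q:ℝ) = 2 := by linarith
    exact_mod_cast this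
  have hIval : (∫ v in (r^2)..1, v ^ (-(q:ℝ)/2))
      = ((1:ℝ) ^ (-(q:ℝ)/2 + 1) - (r^2) ^ (-(q:ℝ)/2 + 1)) / (-(q:ℝ)/2 + 1) :=
    integral_rpow (Or.inr ⟨hqne, h0notin⟩)
  rw [hgsplit] at hkey
  rw [abs_mul, abs_of_nonneg (by positivity : (0:ℝ) ≤ r ^ p * M')] at hkey
  set e : ℝ := -(q:ℝ)/2 + 1 with he
  clear_value e
  rcases (by omega : q ≤ 1 ∨ 3 ≤ q) with hc | hc
  · -- q ≤ 1 : min = p, integral ≤ 2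
    have hmin : min (p + 1 - q + 1) p = p := by omega
    rw [hmin]
    have hepos : (1:ℝ)/2 ≤ e := by
      have : (q:ℝ) ≤ 1 := by exact_mod_cast hc
      rw [he]; linarith
    have hA0 : (0:ℝ) ≤ (r^2) ^ e := Real.rpow_nonneg hr2pos.le _
    have hA1 : (r^2 : ℝ) ^ e ≤ 1 := Real.rpow_le_one hr2pos.le hr2lt1.le (by linarith)
    have hIb : |∫ v in (r^2)..1, v ^ (-(q:ℝ)/2)| ≤ 2 := by
      rw [hIval, Real.one_rpow, abs_div, abs_of_nonneg (by linarith),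
        abs_of_nonneg (by linarith)]
      rw [div_le_iff₀ (by linarith)]
      linarith
    calc |∫ v in (r^2)..1, v ^ (-(q:ℝ)/2) * r ^ p * T (v, v ^ (-(3:ℝ)/2) * r^3)|
        ≤ |∫ v in (r^2)..1, v ^ (-(q:ℝ)/2)| * (r ^ p * M') := hkey
      _ ≤ 2 * (r ^ p * M') := by
          exact mul_le_mul_of_nonneg_right hIb (by positivity)
      _ = 2 * M' * r ^ p := by ring
  · -- q ≥ 3
    have hmin : min (p + 1 - q + 1) p = p + 2 - q := by omega
    rw [hmin]
    have hq3 : (3:ℝ) ≤ (q:ℝ) := by exact_mod_cast hc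
    have heneg : e ≤ -(1:ℝ)/2 := by rw [he]; linarith
    set A : ℝ := r ^ ((2:ℝ) - q) with hA
    have hrA : (r^2 : ℝ) ^ e = A := by
      rw [hA, ← Real.rpow_natCast r 2, ← Real.rpow_mul hr0.le, he]
      ring_nf
    have hA1 : (1:ℝ) ≤ A :=
      Real.one_le_rpow_of_pos_of_le_one_of_nonpos hr0 hr1 (by linarith)
    have hIb : |∫ v in (r^2)..1, v ^ (-(q:ℝ)/2)| ≤ 2 * A := by
      rw [hIval, Real.one_rpow, hrA, abs_div, abs_of_nonpos (by linarith),
        abs_of_nonpos (by linarith)]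
      rw [div_le_iff₀ (by linarith)]
      nlinarith
    have hpow : r ^ p * A = r ^ (p + 2 - q) := by
      have hcast : ((p + 2 - q : ℕ) : ℝ) = (p:ℝ) + 2 - q := by
        have : q ≤ p + 2 := by omega
        push_cast [Nat.cast_sub this]
        ring
      rw [hA, ← Real.rpow_natCast r p, ← Real.rpow_add hr0,
        ← Real.rpow_natCast r (p + 2 - q), hcast]
      ring_nf
    calc |∫ v in (r^2)..1, v ^ (-(q:ℝ)/2) * r ^ p * T (v, v ^ (-(3:ℝ)/2) * r^3)|
        ≤ |∫ v in (r^2)..1, v ^ (-(q:ℝ)/2)| * (r ^ p * M') := hkey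
      _ ≤ 2 * A * (r ^ p * M') := mul_le_mul_of_nonneg_right hIb (by positivity)
      _ = 2 * M' * (r ^ p * A) := by ring
      _ = 2 * M' * r ^ (p + 2 - q) := by rw [hpow]
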